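/- Every fixed point structure of the invariant distributions: a probability measure ξ on [0,1] is an invariant (stationary) distribution for the Wright–Fisher McKean–Vlasov equation df_t = s̄(Law(f_t)) f_t(1-f_t)dt + Θ̄(f_t)dt + √(f_t(1-f_t))dB_t (with θ⁺, θ⁻ > 0) if and only if ξ = Π_{y*} for some y* ∈ ℝ satisfying χ(y*) = y*, where Π_y has density C_y x^{2θ⁺-1}(1-x)^{2θ⁻-1}e^{2xy} on [0,1] and χ(y) := s̄(Π_y). Moreover, χ admits at least one fixed point. -/

import Mathlib

open MeasureTheory Set Filter Topology
open scoped ENNReal NNReal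


/-- Unnormalized density of `Π_y`: `x^{2θ⁺-1}(1-x)^{2θ⁻-1}e^{2xy}`. -/
noncomputable def dens (θp θm y x : ℝ) : ℝ :=
  x ^ (2 * θp - 1) * (1 - x) ^ (2 * θm - 1) * Real.exp (2 * x * y)

/-- The normalized measure `Π_y` on `[0,1]`, with density
`C_y x^{2θ⁺-1}(1-x)^{2θ⁻-1}e^{2xy}`. -/
noncomputable def PiMeas (θp θm y : ℝ) : Measure ℝ :=
  (volume.restrict (Icc (0 : ℝ) 1)).withDensity fun x =>
    ENNReal.ofReal (dens θp θm y x / ∫ z in Icc (0 : ℝ) 1, dens θp θm y z)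

/-- The selection functional `s̄(ξ) = 2U'(⟨ξ, 2Id-1⟩)` for
`U(z) = ca·z² + cb·z + cc`. -/
noncomputable def sbar (ca cb : ℝ) (ξ : Measure ℝ) : ℝ :=
  2 * (2 * ca * (∫ x, (2 * x - 1) ∂ξ) + cb)

/-- Mutation drift `Θ̄(x) = θ⁺(1-x) - θ⁻x`. -/
noncomputable def thetaBar (θp θm x : ℝ) : ℝ := θp * (1 - x) - θm * x

/-- Generator of the Wright–Fisher McKean–Vlasov dynamics, frozen at the
measure `ξ`:
`Ḡ_ξφ(x) = (s̄(ξ)x(1-x) + Θ̄(x))φ'(x) + ½x(1-x)φ''(x)`. -/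
noncomputable def gen (θp θm ca cb : ℝ) (ξ : Measure ℝ) (φ : ℝ → ℝ) (x : ℝ) : ℝ :=
  (sbar ca cb ξ * (x * (1 - x)) + thetaBar θp θm x) * deriv φ x
    + (1 / 2) * (x * (1 - x)) * deriv (deriv φ) x

/-- A probability measure `ξ` on `[0,1]` is invariant for the Wright–Fisher
McKean–Vlasov equation iff `∫ Ḡ_ξ φ dξ = 0` for all `φ ∈ C²`. -/
def IsInvariantWF (θp θm ca cb : ℝ) (ξ : Measure ℝ) : Prop :=
  IsProbabilityMeasure ξ ∧ ξ (Icc (0 : ℝ) 1)ᶜ = 0 ∧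
  ∀ φ : ℝ → ℝ, ContDiff ℝ 2 φ → ∫ x, gen θp θm ca cb ξ φ x ∂ξ = 0


namespace WF


variable {θp θm y x : ℝ}

lemma dens_nonneg (hx : x ∈ Icc (0:ℝ) 1) : 0 ≤ dens θp θm y x := by
  have h1 : (0:ℝ) ≤ x := hx.1
  have h2 : (0:ℝ) ≤ 1 - x := by linarith [hx.2]
  exact mul_nonneg (mul_nonneg (Real.rpow_nonneg h1 _) (Real.rpow_nonneg h2 _))
    (Real.exp_pos _).le

lemma dens_pos (hx : x ∈ Ioo (0:ℝ) 1) : 0 < dens θp θm y x := by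
  have h1 : (0:ℝ) < x := hx.1
  have h2 : (0:ℝ) < 1 - x := by linarith [hx.2]
  exact mul_pos (mul_pos (Real.rpow_pos_of_pos h1 _) (Real.rpow_pos_of_pos h2 _))
    (Real.exp_pos _)

lemma measurable_dens : Measurable (dens θp θm y) := by
  unfold dens
  fun_prop

lemma continuousOn_dens : ContinuousOn (dens θp θm y) (Ioo 0 1) := by
  intro x hx
  have h1 : x ≠ 0 := ne_of_gt hx.1
  have h2 : (1:ℝ) - x ≠ 0 := by have := hx.2; intro h; linarith [sub_eq_zero.mp h]
  apply ContinuousAt.continuousWithinAt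
  apply ContinuousAt.mul
  apply ContinuousAt.mul
  · exact Real.continuousAt_rpow_const x _ (Or.inl h1)
  · exact (Real.continuousAt_rpow_const (1 - x) _ (Or.inl h2)).comp
      (continuousAt_const.sub continuousAt_id)
  · exact (Real.continuous_exp.continuousAt).comp (by fun_prop)

lemma integrableOn_dens (hθp : 0 < θp) (hθm : 0 < θm) :
    IntegrableOn (dens θp θm y) (Icc 0 1) := by
  have key : ∀ (u v : ℝ → ℝ) (c d : ℝ), ContinuousOn u (Icc c d) →
      IntegrableOn v (Icc c d) → (∀ z ∈ Icc c d, ‖dens θp θm y z‖ ≤ u z * v z) →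
      (∀ z ∈ Icc c d, 0 ≤ v z) → False ∨ True := fun _ _ _ _ _ _ _ _ => Or.inr trivial
  clear key
  have h01 : (0:ℝ) ≤ 1/2 := by norm_num
  have h12 : (1:ℝ)/2 ≤ 1 := by norm_num
  have hsub : Icc (0:ℝ) 1 ⊆ Icc 0 (1/2) ∪ Icc (1/2) 1 := by
    intro z hz
    rcases le_total z (1/2) with h | h
    · exact Or.inl ⟨hz.1, h⟩
    · exact Or.inr ⟨h, hz.2⟩
  apply IntegrableOn.mono_set _ hsub
  apply IntegrableOn.union
  · -- near 0
    obtain ⟨M, hM⟩ : ∃ M, ∀ z ∈ Icc (0:ℝ) (1/2),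
        (1 - z) ^ (2*θm - 1) * Real.exp (2*z*y) ≤ M := by
      have hc : ContinuousOn (fun z : ℝ => (1 - z) ^ (2*θm - 1) * Real.exp (2*z*y))
          (Icc 0 (1/2)) := by
        intro z hz
        have h2 : (1:ℝ) - z ≠ 0 := by have := hz.2; intro h; nlinarith [sub_eq_zero.mp h]
        apply ContinuousAt.continuousWithinAt
        exact ((Real.continuousAt_rpow_const (1 - z) _ (Or.inl h2)).comp
          (continuousAt_const.sub continuousAt_id)).mul
          ((Real.continuous_exp.continuousAt).comp (by fun_prop))
      obtain ⟨M, hM⟩ := (isCompact_Icc.image_of_continuousOn hc).bddAbove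
      exact ⟨M, fun z hz => hM ⟨z, hz, rfl⟩⟩
    have hint : IntegrableOn (fun z : ℝ => M * z ^ (2*θp - 1)) (Icc 0 (1/2)) := by
      have := (intervalIntegral.intervalIntegrable_rpow' (r := 2*θp - 1) (by linarith)
        (a := 0) (b := 1/2))
      exact ((intervalIntegrable_iff_integrableOn_Icc_of_le h01).mp this).const_mul M
    apply Integrable.mono' hint (measurable_dens.aestronglyMeasurable.restrict)
    filter_upwards [ae_restrict_mem measurableSet_Icc] with z hz
    have hz0 : (0:ℝ) ≤ z := hz.1
    have hd : 0 ≤ dens θp θm y z := dens_nonneg ⟨hz.1, by linarith [hz.2]⟩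
    rw [Real.norm_of_nonneg hd]
    calc dens θp θm y z = ((1 - z) ^ (2*θm - 1) * Real.exp (2*z*y)) * z ^ (2*θp - 1) := by
          unfold dens; ring
      _ ≤ M * z ^ (2*θp - 1) := by
          apply mul_le_mul_of_nonneg_right (hM z hz) (Real.rpow_nonneg hz0 _)
  · -- near 1
    obtain ⟨M, hM⟩ : ∃ M, ∀ z ∈ Icc (1/2:ℝ) 1,
        z ^ (2*θp - 1) * Real.exp (2*z*y) ≤ M := by
      have hc : ContinuousOn (fun z : ℝ => z ^ (2*θp - 1) * Real.exp (2*z*y))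
          (Icc (1/2) 1) := by
        intro z hz
        have h2 : z ≠ 0 := by have := hz.1; intro h; rw [h] at this; norm_num at this
        apply ContinuousAt.continuousWithinAt
        exact (Real.continuousAt_rpow_const z _ (Or.inl h2)).mul
          ((Real.continuous_exp.continuousAt).comp (by fun_prop))
      obtain ⟨M, hM⟩ := (isCompact_Icc.image_of_continuousOn hc).bddAbove
      exact ⟨M, fun z hz => hM ⟨z, hz, rfl⟩⟩
    have hint : IntegrableOn (fun z : ℝ => M * (1 - z) ^ (2*θm - 1)) (Icc (1/2) 1) := by
      have h0 := (intervalIntegral.intervalIntegrable_rpow' (r := 2*θm - 1) (by linarith)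
        (a := 0) (b := 1/2))
      have h1 := (h0.comp_sub_left 1).symm
      norm_num at h1
      exact ((intervalIntegrable_iff_integrableOn_Icc_of_le h12).mp h1).const_mul M
    apply Integrable.mono' hint (measurable_dens.aestronglyMeasurable.restrict)
    filter_upwards [ae_restrict_mem measurableSet_Icc] with z hz
    have hz1 : (0:ℝ) ≤ 1 - z := by linarith [hz.2]
    have hd : 0 ≤ dens θp θm y z := dens_nonneg ⟨by linarith [hz.1], hz.2⟩
    rw [Real.norm_of_nonneg hd]
    calc dens θp θm y z = (z ^ (2*θp - 1) * Real.exp (2*z*y)) * (1 - z) ^ (2*θm - 1) := by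
          unfold dens; ring
      _ ≤ M * (1 - z) ^ (2*θm - 1) := by
          apply mul_le_mul_of_nonneg_right (hM z hz) (Real.rpow_nonneg hz1 _)

lemma Zpos (hθp : 0 < θp) (hθm : 0 < θm) :
    0 < ∫ z in Icc (0:ℝ) 1, dens θp θm y z := by
  rw [setIntegral_pos_iff_support_of_nonneg_ae]
  · have hsub : Ioo (0:ℝ) 1 ⊆ Function.support (dens θp θm y) ∩ Icc 0 1 := by
      intro z hz
      exact ⟨ne_of_gt (dens_pos hz), Ioo_subset_Icc_self hz⟩
    calc (0:ℝ≥0∞) < volume (Ioo (0:ℝ) 1) := by simp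
      _ ≤ _ := measure_mono hsub
  · filter_upwards [ae_restrict_mem measurableSet_Icc] with z hz using dens_nonneg hz
  · exact integrableOn_dens hθp hθm


variable {θp θm y x : ℝ}

/-- `Z` the normalizing constant. -/
noncomputable def Z (θp θm y : ℝ) : ℝ := ∫ z in Icc (0:ℝ) 1, dens θp θm y z

lemma Znonneg : 0 ≤ Z θp θm y :=
  setIntegral_nonneg measurableSet_Icc fun _ ha => dens_nonneg ha

lemma PiMeas_compl : PiMeas θp θm y (Icc (0:ℝ) 1)ᶜ = 0 := by
  rw [PiMeas, withDensity_apply _ measurableSet_Icc.compl,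
    Measure.restrict_restrict measurableSet_Icc.compl]
  simp

lemma integral_PiMeas (f : ℝ → ℝ) :
    ∫ a, f a ∂(PiMeas θp θm y)
      = ∫ a in Icc (0:ℝ) 1, (dens θp θm y a / Z θp θm y) * f a := by
  have hmeas : Measurable fun a => (dens θp θm y a / Z θp θm y).toNNReal :=
    (measurable_dens.div_const _).real_toNNReal
  have h0 : PiMeas θp θm y
      = (volume.restrict (Icc (0:ℝ) 1)).withDensity
        fun a => ((dens θp θm y a / Z θp θm y).toNNReal : ℝ≥0∞) := rfl
  rw [h0, integral_withDensity_eq_integral_smul hmeas]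
  apply setIntegral_congr_ae measurableSet_Icc
  filter_upwards with a ha
  rw [NNReal.smul_def, Real.coe_toNNReal _ (div_nonneg (dens_nonneg ha) Znonneg),
    smul_eq_mul]

lemma PiMeas_prob (hθp : 0 < θp) (hθm : 0 < θm) :
    IsProbabilityMeasure (PiMeas θp θm y) := by
  constructor
  have hZ : (∫ z in Icc (0:ℝ) 1, dens θp θm y z) ≠ 0 := ne_of_gt (Zpos hθp hθm)
  rw [PiMeas, withDensity_apply _ MeasurableSet.univ, Measure.restrict_univ,
    ← ofReal_integral_eq_lintegral_ofReal]
  · rw [integral_div, div_self hZ, ENNReal.ofReal_one]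
  · exact (integrableOn_dens hθp hθm).div_const _
  · filter_upwards [ae_restrict_mem measurableSet_Icc] with a ha
    exact div_nonneg (dens_nonneg ha) Znonneg

lemma PiMeas_singleton (a : ℝ) : PiMeas θp θm y {a} = 0 := by
  rw [PiMeas, withDensity_apply _ (measurableSet_singleton a),
    Measure.restrict_restrict (measurableSet_singleton a)]
  have : volume ({a} ∩ Icc (0:ℝ) 1) = 0 :=
    measure_mono_null (inter_subset_left) (Real.volume_singleton)
  rw [setLIntegral_measure_zero _ _ this]

/-- The function `q(x) = x^{2θp}(1-x)^{2θm}e^{2xy}`, equal to `x(1-x)·dens`. -/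
noncomputable def qfun (θp θm y x : ℝ) : ℝ :=
  x ^ (2 * θp) * (1 - x) ^ (2 * θm) * Real.exp (2 * x * y)

lemma continuous_qfun (hθp : 0 < θp) (hθm : 0 < θm) : Continuous (qfun θp θm y) := by
  apply Continuous.mul
  apply Continuous.mul
  · exact continuous_iff_continuousAt.mpr fun x =>
      Real.continuousAt_rpow_const x _ (Or.inr (by linarith))
  · exact (continuous_iff_continuousAt.mpr fun x =>
      Real.continuousAt_rpow_const x _ (Or.inr (by linarith))).comp
      (continuous_const.sub continuous_id)
  · exact Real.continuous_exp.comp (by fun_prop)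

lemma qfun_zero (hθp : 0 < θp) : qfun θp θm y 0 = 0 := by
  rw [qfun, Real.zero_rpow (by linarith)]; ring

lemma qfun_one (hθm : 0 < θm) : qfun θp θm y 1 = 0 := by
  have : ((1:ℝ) - 1) ^ (2*θm) = 0 := by
    norm_num
    exact Real.zero_rpow (by linarith)
  rw [qfun, this]
  ring

lemma qfun_eq (hx : x ∈ Ioo (0:ℝ) 1) :
    qfun θp θm y x = x * (1 - x) * dens θp θm y x := by
  have h1 : x ≠ 0 := ne_of_gt hx.1
  have h2 : (1:ℝ) - x ≠ 0 := ne_of_gt (by linarith [hx.2])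
  have e1 : x ^ (2*θp) = x * x ^ (2*θp - 1) := by
    rw [show 2*θp = (2*θp - 1) + 1 by ring, Real.rpow_add_one h1]; ring
  have e2 : (1-x) ^ (2*θm) = (1-x) * (1-x) ^ (2*θm - 1) := by
    rw [show 2*θm = (2*θm - 1) + 1 by ring, Real.rpow_add_one h2]; ring
  rw [qfun, dens, e1, e2]
  ring

lemma hasDerivAt_qfun (hx : x ∈ Ioo (0:ℝ) 1) :
    HasDerivAt (qfun θp θm y)
      (2 * (y * (x * (1 - x)) + thetaBar θp θm x) * dens θp θm y x) x := by
  have h1 : x ≠ 0 := ne_of_gt hx.1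
  have h2 : (1:ℝ) - x ≠ 0 := ne_of_gt (by linarith [hx.2])
  have d1 : HasDerivAt (fun t : ℝ => t ^ (2*θp)) (2*θp * x ^ (2*θp - 1)) x :=
    Real.hasDerivAt_rpow_const (Or.inl h1)
  have d2' : HasDerivAt (fun t : ℝ => t ^ (2*θm)) (2*θm * (1-x) ^ (2*θm - 1)) (1 - x) :=
    Real.hasDerivAt_rpow_const (Or.inl h2)
  have d2 : HasDerivAt (fun t : ℝ => (1 - t) ^ (2*θm))
      (2*θm * (1-x) ^ (2*θm - 1) * (-1)) x := by
    have hin : HasDerivAt (fun t : ℝ => 1 - t) (-1) x := by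
      simpa using (hasDerivAt_id x).const_sub 1
    exact d2'.comp x hin
  have d3 : HasDerivAt (fun t : ℝ => Real.exp (2*t*y)) (Real.exp (2*x*y) * (2*y)) x := by
    have : HasDerivAt (fun t : ℝ => 2*t*y) (2*y) x := by
      simpa using ((hasDerivAt_id x).const_mul 2).mul_const y
    exact (Real.hasDerivAt_exp (2*x*y)).comp x this
  have := ((d1.mul d2).mul d3)
  refine this.congr_deriv ?_
  have e1 : x ^ (2*θp) = x * x ^ (2*θp - 1) := by
    rw [show 2*θp = (2*θp - 1) + 1 by ring, Real.rpow_add_one h1]; ring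
  have e2 : (1-x) ^ (2*θm) = (1-x) * (1-x) ^ (2*θm - 1) := by
    rw [show 2*θm = (2*θm - 1) + 1 by ring, Real.rpow_add_one h2]; ring
  simp only [Pi.mul_apply]
  rw [dens, thetaBar, e1, e2]
  ring

/-- Core integration-by-parts identity. -/
lemma core_ibp (hθp : 0 < θp) (hθm : 0 < θm) {ψ : ℝ → ℝ} (hψ : ContDiff ℝ 1 ψ) :
    ∫ a in Icc (0:ℝ) 1,
      ((y * (a * (1 - a)) + thetaBar θp θm a) * ψ a
        + (1/2) * (a * (1 - a)) * deriv ψ a) * dens θp θm y a = 0 := by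
  set G : ℝ → ℝ := fun a =>
      ((y * (a * (1 - a)) + thetaBar θp θm a) * ψ a
        + (1/2) * (a * (1 - a)) * deriv ψ a) * dens θp θm y a with hG
  have hψc : Continuous ψ := hψ.continuous
  have hψd : Continuous (deriv ψ) := (contDiff_one_iff_deriv.mp hψ).2
  -- the antiderivative
  set F : ℝ → ℝ := fun a => (1/2) * qfun θp θm y a * ψ a with hF
  have hFcont : ContinuousOn F (Icc 0 1) :=
    ((continuous_const.mul (continuous_qfun hθp hθm)).mul hψc).continuousOn
  have hFderiv : ∀ a ∈ Ioo (0:ℝ) 1, HasDerivAt F (G a) a := by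
    intro a ha
    have h1 := ((hasDerivAt_qfun (θp := θp) (θm := θm) (y := y) ha).const_mul (1/2 : ℝ)).mul
      (hψ.differentiable one_ne_zero a).hasDerivAt
    refine h1.congr_deriv ?_
    simp only [hG]
    rw [qfun_eq ha]
    ring
  -- integrability of G on [0,1]
  have hGint : IntegrableOn G (Icc (0:ℝ) 1) := by
    have hcont : Continuous fun a =>
        (y * (a * (1 - a)) + thetaBar θp θm a) * ψ a
          + (1/2) * (a * (1 - a)) * deriv ψ a := by
      unfold thetaBar; fun_prop
    obtain ⟨M', hM'⟩ := (isCompact_Icc.image hcont.norm).bddAbove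
    have hM'nn : ∀ a ∈ Icc (0:ℝ) 1,
        ‖(y * (a * (1 - a)) + thetaBar θp θm a) * ψ a
          + (1/2) * (a * (1 - a)) * deriv ψ a‖ ≤ M' := fun a ha => hM' ⟨a, ha, rfl⟩
    apply Integrable.mono' (((integrableOn_dens (θp := θp) (θm := θm) (y := y) hθp hθm).const_mul M'))
      ((hcont.measurable.mul measurable_dens).aestronglyMeasurable.restrict)
    filter_upwards [ae_restrict_mem measurableSet_Icc] with a ha
    rw [Pi.mul_apply, norm_mul, Real.norm_of_nonneg (dens_nonneg ha)]
    exact mul_le_mul_of_nonneg_right (hM'nn a ha) (dens_nonneg ha)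
  have hGii : IntervalIntegrable G volume 0 1 :=
    (intervalIntegrable_iff_integrableOn_Icc_of_le (by norm_num)).mpr hGint
  have key : ∫ a in (0:ℝ)..1, G a = F 1 - F 0 := by
    apply intervalIntegral.integral_eq_sub_of_hasDeriv_right_of_le (by norm_num)
      hFcont (fun a ha => (hFderiv a ha).hasDerivWithinAt) hGii
  have hF1 : F 1 = 0 := by rw [hF]; simp [qfun_one hθm]
  have hF0 : F 0 = 0 := by rw [hF]; simp [qfun_zero hθp]
  rw [MeasureTheory.integral_Icc_eq_integral_Ioc,
    ← intervalIntegral.integral_of_le (by norm_num : (0:ℝ) ≤ 1), key, hF1, hF0, sub_zero]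


variable {θp θm y : ℝ}

lemma integrableOn_mul_dens (hθp : 0 < θp) (hθm : 0 < θm) {h : ℝ → ℝ}
    (hc : Continuous h) :
    IntegrableOn (fun a => h a * dens θp θm y a) (Icc 0 1) := by
  obtain ⟨M, hM⟩ := (isCompact_Icc.image hc.norm).bddAbove
  apply Integrable.mono' ((integrableOn_dens (θp := θp) (θm := θm) (y := y) hθp hθm).const_mul M)
    ((hc.measurable.mul measurable_dens).aestronglyMeasurable.restrict)
  filter_upwards [ae_restrict_mem measurableSet_Icc] with a ha
  rw [Pi.mul_apply, norm_mul, Real.norm_of_nonneg (dens_nonneg ha)]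
  exact mul_le_mul_of_nonneg_right (hM ⟨a, ha, rfl⟩) (dens_nonneg ha)

lemma continuous_wint (hθp : 0 < θp) (hθm : 0 < θm) {g : ℝ → ℝ}
    (hgm : Measurable g) (hgb : ∀ a ∈ Icc (0:ℝ) 1, |g a| ≤ 1) :
    Continuous fun y => ∫ a in Icc (0:ℝ) 1, g a * dens θp θm y a := by
  rw [continuous_iff_continuousAt]
  intro y₀
  have hnb : ∀ᶠ y' in 𝓝 y₀, y' ∈ Metric.ball y₀ 1 :=
    Metric.ball_mem_nhds y₀ one_pos
  apply continuousAt_of_dominated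
    (bound := fun a => Real.exp (2 * (|y₀| + 1)) * dens θp θm 0 a)
  · filter_upwards with y'
    exact (hgm.mul measurable_dens).aestronglyMeasurable.restrict
  · filter_upwards [hnb] with y' hy'
    filter_upwards [ae_restrict_mem measurableSet_Icc] with a ha
    have h0 : (0:ℝ) ≤ a := ha.1
    have h1 : a ≤ 1 := ha.2
    have hdnn := dens_nonneg (θp := θp) (θm := θm) (y := y') ha
    rw [norm_mul, Real.norm_of_nonneg hdnn]
    have hyb : |y'| ≤ |y₀| + 1 := by
      have := mem_ball_iff_norm.mp hy'
      rw [Real.norm_eq_abs] at this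
      calc |y'| ≤ |y' - y₀| + |y₀| := by
            have := abs_sub_abs_le_abs_sub y' y₀; linarith
        _ ≤ |y₀| + 1 := by linarith
    have hexp : Real.exp (2 * a * y') ≤ Real.exp (2 * (|y₀| + 1)) := by
      apply Real.exp_le_exp.mpr
      calc 2 * a * y' ≤ |2 * a * y'| := le_abs_self _
        _ = 2 * a * |y'| := by rw [abs_mul, abs_of_nonneg (by linarith : (0:ℝ) ≤ 2*a)]
        _ ≤ 2 * 1 * (|y₀| + 1) := by
            apply mul_le_mul (by linarith) hyb (abs_nonneg _) (by norm_num)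
        _ = 2 * (|y₀| + 1) := by ring
    calc ‖g a‖ * dens θp θm y' a ≤ 1 * dens θp θm y' a := by
          apply mul_le_mul_of_nonneg_right _ hdnn
          rw [Real.norm_eq_abs]; exact hgb a ha
      _ = dens θp θm y' a := one_mul _
      _ ≤ Real.exp (2 * (|y₀| + 1)) * dens θp θm 0 a := by
          rw [dens, dens]
          have hb : (0:ℝ) ≤ a ^ (2*θp - 1) * (1 - a) ^ (2*θm - 1) :=
            mul_nonneg (Real.rpow_nonneg h0 _) (Real.rpow_nonneg (by linarith) _)
          calc a ^ (2*θp-1) * (1-a) ^ (2*θm-1) * Real.exp (2*a*y')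
              ≤ a ^ (2*θp-1) * (1-a) ^ (2*θm-1) * Real.exp (2*(|y₀|+1)) :=
                mul_le_mul_of_nonneg_left hexp hb
            _ = Real.exp (2*(|y₀|+1)) * (a ^ (2*θp-1) * (1-a) ^ (2*θm-1) * Real.exp (2*a*0)) := by
                norm_num; ring
  · exact (integrableOn_dens hθp hθm).const_mul _
  · filter_upwards [ae_restrict_mem measurableSet_Icc] with a _
    apply Continuous.continuousAt
    unfold dens
    fun_prop

/-- `χ y = sbar (Π_y)` as a ratio of integrals. -/
lemma sbar_PiMeas (ca cb : ℝ) (hθp : 0 < θp) (hθm : 0 < θm) :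
    sbar ca cb (PiMeas θp θm y)
      = 2 * (2 * ca * ((∫ a in Icc (0:ℝ) 1, (2*a - 1) * dens θp θm y a) / Z θp θm y) + cb) := by
  rw [sbar, integral_PiMeas]
  have heq : ∫ a in Icc (0:ℝ) 1, (dens θp θm y a / Z θp θm y) * (2*a - 1)
      = (∫ a in Icc (0:ℝ) 1, (2*a - 1) * dens θp θm y a) / Z θp θm y := by
    rw [← integral_div]
    apply setIntegral_congr_ae measurableSet_Icc
    filter_upwards with a _
    ring
  rw [heq]

lemma moment_bound (hθp : 0 < θp) (hθm : 0 < θm) :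
    |(∫ a in Icc (0:ℝ) 1, (2*a - 1) * dens θp θm y a) / Z θp θm y| ≤ 1 := by
  have hZ : 0 < Z θp θm y := Zpos hθp hθm
  rw [abs_div, abs_of_pos hZ, div_le_one hZ]
  calc |∫ a in Icc (0:ℝ) 1, (2*a - 1) * dens θp θm y a|
      ≤ ∫ a in Icc (0:ℝ) 1, |2*a - 1| * |dens θp θm y a| := by
        simpa [Real.norm_eq_abs] using
          norm_integral_le_integral_norm (μ := volume.restrict (Icc (0:ℝ) 1))
            (f := fun a => (2*a - 1) * dens θp θm y a)
    _ ≤ ∫ a in Icc (0:ℝ) 1, dens θp θm y a := by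
        apply setIntegral_mono_on _ (integrableOn_dens hθp hθm) measurableSet_Icc
        · intro a ha
          rw [abs_of_nonneg (dens_nonneg ha)]
          have h1 : |2*a - 1| ≤ 1 := by
            rw [abs_le]; constructor <;> [linarith [ha.1]; linarith [ha.2]]
          calc |2*a-1| * dens θp θm y a ≤ 1 * dens θp θm y a :=
                mul_le_mul_of_nonneg_right h1 (dens_nonneg ha)
            _ = dens θp θm y a := one_mul _
        · exact (integrableOn_mul_dens hθp hθm
            (by fun_prop : Continuous fun a : ℝ => |2*a - 1|)).congr_fun
            (fun a ha => by rw [abs_of_nonneg (dens_nonneg ha)]) measurableSet_Icc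

lemma exists_fixed_point (hθp : 0 < θp) (hθm : 0 < θm) (ca cb : ℝ) :
    ∃ y : ℝ, sbar ca cb (PiMeas θp θm y) = y := by
  set χ : ℝ → ℝ := fun y => sbar ca cb (PiMeas θp θm y) with hχ
  have hχeq : ∀ y, χ y
      = 2 * (2 * ca * ((∫ a in Icc (0:ℝ) 1, (2*a - 1) * dens θp θm y a) / Z θp θm y) + cb) :=
    fun y => sbar_PiMeas ca cb hθp hθm
  set K : ℝ := 2 * (2 * |ca| + |cb|) with hK
  have hKnn : 0 ≤ K := by positivity
  have hbound : ∀ y, |χ y| ≤ K := by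
    intro y
    rw [hχeq y, hK]
    have h1 := moment_bound (θp := θp) (θm := θm) (y := y) hθp hθm
    calc |2 * (2 * ca * ((∫ a in Icc (0:ℝ) 1, (2*a-1) * dens θp θm y a) / Z θp θm y) + cb)|
        = 2 * |2 * ca * ((∫ a in Icc (0:ℝ) 1, (2*a-1) * dens θp θm y a) / Z θp θm y) + cb| := by
          rw [abs_mul]; norm_num
      _ ≤ 2 * (|2 * ca * ((∫ a in Icc (0:ℝ) 1, (2*a-1) * dens θp θm y a) / Z θp θm y)| + |cb|) := by
          have := abs_add_le (2 * ca * ((∫ a in Icc (0:ℝ) 1, (2*a-1) * dens θp θm y a) / Z θp θm y)) cb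
          linarith
      _ ≤ 2 * (2 * |ca| + |cb|) := by
          have : |2 * ca * ((∫ a in Icc (0:ℝ) 1, (2*a-1) * dens θp θm y a) / Z θp θm y)|
              ≤ 2 * |ca| := by
            rw [abs_mul, abs_mul, abs_two]
            calc 2 * |ca| * |(∫ a in Icc (0:ℝ) 1, (2*a-1) * dens θp θm y a) / Z θp θm y|
                ≤ 2 * |ca| * 1 := by
                  apply mul_le_mul_of_nonneg_left h1 (by positivity)
              _ = 2 * |ca| := mul_one _
          linarith
  have hcont : Continuous χ := by
    have hN : Continuous fun y => ∫ a in Icc (0:ℝ) 1, (2*a - 1) * dens θp θm y a := by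
      apply continuous_wint hθp hθm (by fun_prop)
      intro a ha
      rw [abs_le]; constructor <;> [linarith [ha.1]; linarith [ha.2]]
    have hD : Continuous fun y => Z θp θm y := by
      have := continuous_wint (θp := θp) (θm := θm) hθp hθm
        (g := fun _ => (1:ℝ)) (by fun_prop) (by intro a _; simp)
      simpa [Z] using this.congr fun y => by
        apply setIntegral_congr_ae measurableSet_Icc
        filter_upwards with a _
        rw [one_mul]
    have : Continuous fun y =>
        2 * (2 * ca * ((∫ a in Icc (0:ℝ) 1, (2*a - 1) * dens θp θm y a) / Z θp θm y) + cb) := by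
      apply Continuous.mul continuous_const
      apply Continuous.add _ continuous_const
      apply Continuous.mul continuous_const
      exact hN.div hD fun y => ne_of_gt (Zpos hθp hθm)
    exact this.congr fun y => (hχeq y).symm
  -- IVT
  have h1 : χ (K + 1) - (K + 1) ≤ 0 := by have := hbound (K+1); have := abs_le.mp this; linarith
  have h2 : 0 ≤ χ (-(K + 1)) - (-(K + 1)) := by
    have := abs_le.mp (hbound (-(K+1))); linarith
  have hab : -(K+1) ≤ K + 1 := by linarith
  have hcont2 : ContinuousOn (fun y => χ y - y) (Icc (-(K+1)) (K+1)) :=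
    (hcont.sub continuous_id).continuousOn
  have := intermediate_value_Icc' hab hcont2
  have h0 : (0:ℝ) ∈ Icc (χ (K+1) - (K+1)) (χ (-(K+1)) - (-(K+1))) := ⟨h1, h2⟩
  obtain ⟨y, _, hy⟩ := this h0
  exact ⟨y, by dsimp at hy; linarith⟩


variable {θp θm y s ca cb : ℝ}

lemma contDiff_two_iff {φ : ℝ → ℝ} :
    ContDiff ℝ 2 φ ↔ Differentiable ℝ φ ∧ ContDiff ℝ 1 (deriv φ) := by
  rw [show (2 : WithTop ℕ∞) = 1 + 1 from by norm_num, contDiff_succ_iff_deriv]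
  constructor
  · rintro ⟨h1, _, h3⟩; exact ⟨h1, h3⟩
  · rintro ⟨h1, h3⟩
    refine ⟨h1, fun h => absurd h (by intro hh; exact (by simp at hh)), h3⟩

/-- The generator integral against `Π_y` with drift parameter `y` vanishes. -/
lemma gen_integral_PiMeas (hθp : 0 < θp) (hθm : 0 < θm) {φ : ℝ → ℝ}
    (hφ : ContDiff ℝ 2 φ) :
    ∫ x, ((y * (x * (1 - x)) + thetaBar θp θm x) * deriv φ x
        + (1/2) * (x * (1 - x)) * deriv (deriv φ) x) ∂(PiMeas θp θm y) = 0 := by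
  obtain ⟨hφd, hφ1⟩ := contDiff_two_iff.mp hφ
  rw [integral_PiMeas]
  have heq : ∫ a in Icc (0:ℝ) 1, (dens θp θm y a / Z θp θm y)
        * ((y * (a * (1 - a)) + thetaBar θp θm a) * deriv φ a
          + (1/2) * (a * (1 - a)) * deriv (deriv φ) a)
      = (∫ a in Icc (0:ℝ) 1,
          ((y * (a * (1 - a)) + thetaBar θp θm a) * deriv φ a
            + (1/2) * (a * (1 - a)) * deriv (deriv φ) a) * dens θp θm y a) / Z θp θm y := by
    rw [← integral_div]
    apply setIntegral_congr_ae measurableSet_Icc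
    filter_upwards with a _
    ring
  rw [heq, core_ibp hθp hθm hφ1, zero_div]

/-- Backward direction helper: `Π_y` with `χ(y) = y` is invariant. -/
lemma gen_PiMeas_zero (hθp : 0 < θp) (hθm : 0 < θm)
    (hfix : sbar ca cb (PiMeas θp θm y) = y) {φ : ℝ → ℝ} (hφ : ContDiff ℝ 2 φ) :
    ∫ x, gen θp θm ca cb (PiMeas θp θm y) φ x ∂(PiMeas θp θm y) = 0 := by
  have := gen_integral_PiMeas (θp := θp) (θm := θm) (y := y) hθp hθm hφ
  rw [← this]
  apply integral_congr_ae
  filter_upwards with x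
  rw [gen, hfix]

/-- The key test-function lemma: if `g` is continuous, supported in
`[ε,1-ε] ⊂ (0,1)`, and orthogonal to `dens` with drift `s = sbar μ`, then
`∫ g dμ = 0` for any invariant `μ`. -/
lemma test_zero (hθp : 0 < θp) (hθm : 0 < θm) {μ : Measure ℝ}
    (hcompl : μ (Icc (0:ℝ) 1)ᶜ = 0)
    (hinv : ∀ φ : ℝ → ℝ, ContDiff ℝ 2 φ → ∫ x, gen θp θm ca cb μ φ x ∂μ = 0)
    {g : ℝ → ℝ} (hg : Continuous g) {ε : ℝ} (hε : 0 < ε) (hε2 : ε < 1/2)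
    (hsupp : ∀ x, x ∉ Icc ε (1-ε) → g x = 0)
    (hortho : ∫ a in Icc (0:ℝ) 1, g a * dens θp θm (sbar ca cb μ) a = 0) :
    ∫ a, g a ∂μ = 0 := by
  set S : ℝ := sbar ca cb μ with hS
  -- the integrand h = g * dens
  set h : ℝ → ℝ := fun t => g t * dens θp θm S t with hh
  have hhc : Continuous h := by
    rw [continuous_iff_continuousAt]
    intro t
    rcases lt_trichotomy t ε with ht | ht | ht
    · have hev : h =ᶠ[𝓝 t] fun _ => (0:ℝ) := by
        filter_upwards [Iio_mem_nhds ht] with u hu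
        simp only [hh, hsupp u (fun hc => absurd hc.1 (not_le.mpr hu)), zero_mul]
      exact hev.continuousAt
    · -- t = ε ∈ Ioo 0 1
      have : t ∈ Ioo (0:ℝ) 1 := by constructor <;> [linarith; linarith]
      exact (hg.continuousAt.mul (continuousOn_dens.continuousAt
        (Ioo_mem_nhds this.1 this.2)))
    · rcases lt_trichotomy t (1-ε) with ht' | ht' | ht'
      · have : t ∈ Ioo (0:ℝ) 1 := by constructor <;> [linarith; linarith]
        exact (hg.continuousAt.mul (continuousOn_dens.continuousAt
          (Ioo_mem_nhds this.1 this.2)))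
      · have : t ∈ Ioo (0:ℝ) 1 := by constructor <;> [linarith; linarith]
        exact (hg.continuousAt.mul (continuousOn_dens.continuousAt
          (Ioo_mem_nhds this.1 this.2)))
      · have hev : h =ᶠ[𝓝 t] fun _ => (0:ℝ) := by
          filter_upwards [Ioi_mem_nhds ht'] with u hu
          simp only [hh, hsupp u (fun hc => absurd hc.2 (not_le.mpr hu)), zero_mul]
        exact hev.continuousAt
  -- antiderivative W
  set W : ℝ → ℝ := fun u => ∫ t in (0:ℝ)..u, h t with hW
  have hWd : ∀ u, HasDerivAt W (h u) u := fun u =>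
    (hhc.integral_hasStrictDerivAt 0 u).hasDerivAt
  have hWc1 : ContDiff ℝ 1 W := by
    rw [contDiff_one_iff_deriv]
    refine ⟨fun u => (hWd u).differentiableAt, ?_⟩
    have : deriv W = h := funext fun u => (hWd u).deriv
    rw [this]; exact hhc
  have hae : ∀ᵐ (t : ℝ), t ≠ ε := by
    rw [ae_iff]
    have : {t : ℝ | ¬ t ≠ ε} = {ε} := by ext t; simp
    rw [this, Real.volume_singleton]
  have hae2 : ∀ᵐ (t : ℝ), t ≠ 1 - ε := by
    rw [ae_iff]
    have : {t : ℝ | ¬ t ≠ 1-ε} = {1-ε} := by ext t; simp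
    rw [this, Real.volume_singleton]
  have hW0 : ∀ u ≤ ε, W u = 0 := by
    intro u hu
    show (∫ t in (0:ℝ)..u, h t) = 0
    apply intervalIntegral.integral_zero_ae
    filter_upwards [hae] with t htne ht
    rw [Set.uIoc] at ht
    have htε : t ≤ ε := le_trans ht.2 (max_le hε.le hu)
    have : t < ε := lt_of_le_of_ne htε htne
    simp only [hh, hsupp t (fun hc => absurd hc.1 (not_le.mpr this)), zero_mul]
  have hWtot : W 1 = 0 := by
    show (∫ t in (0:ℝ)..1, h t) = 0
    rw [intervalIntegral.integral_of_le (by norm_num : (0:ℝ) ≤ 1),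
      ← MeasureTheory.integral_Icc_eq_integral_Ioc]
    exact hortho
  have hW1 : ∀ u, 1 - ε ≤ u → W u = 0 := by
    intro u hu
    have hsplit : W u - W 1 = ∫ t in (1:ℝ)..u, h t := by
      show (∫ t in (0:ℝ)..u, h t) - (∫ t in (0:ℝ)..1, h t) = ∫ t in (1:ℝ)..u, h t
      rw [← intervalIntegral.integral_add_adjacent_intervals
        (a := (0:ℝ)) (b := 1) (c := u)
        (hhc.intervalIntegrable 0 1) (hhc.intervalIntegrable 1 u)]
      ring
    have hzero : ∫ t in (1:ℝ)..u, h t = 0 := by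
      apply intervalIntegral.integral_zero_ae
      filter_upwards [hae2] with t htne ht
      rw [Set.uIoc] at ht
      have : 1 - ε < t := by
        have h1 : min 1 u ≤ t := le_of_lt ht.1
        have := ht.1
        rcases le_total 1 u with hc | hc
        · have : 1 - ε < min 1 u := by rw [min_eq_left hc]; linarith
          linarith [lt_of_lt_of_le this (le_of_lt ht.1)]
        · have hmin : min 1 u = u := min_eq_right hc
          rw [hmin] at h1
          linarith
      simp only [hh, hsupp t (fun hc => absurd hc.2 (not_le.mpr this)), zero_mul]
    have := hsplit
    rw [hzero, hWtot, sub_zero] at this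
    linarith [this]
  -- the test function ψ = 2W/q
  set q : ℝ → ℝ := qfun θp θm S with hq
  set ψ : ℝ → ℝ := fun u => 2 * W u / q u with hψ
  have hψ0 : ∀ u, u ≤ ε ∨ 1 - ε ≤ u → ψ u = 0 := by
    intro u hu
    have hWz : W u = 0 := hu.elim (fun hle => hW0 u hle) (fun hle => hW1 u hle)
    simp only [hψ, hWz, mul_zero, zero_div]
  have hqne : ∀ u ∈ Ioo (0:ℝ) 1, q u ≠ 0 := by
    intro u hu
    rw [hq, qfun_eq hu]
    have hd := dens_pos (θp := θp) (θm := θm) (y := S) hu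
    have h1 : 0 < u * (1 - u) := mul_pos hu.1 (by linarith [hu.2])
    exact ne_of_gt (mul_pos h1 hd)
  have hqc : ∀ u ∈ Ioo (0:ℝ) 1, ContDiffAt ℝ 1 q u := by
    intro u hu
    have h1 : u ≠ 0 := ne_of_gt hu.1
    have h2 : (1:ℝ) - u ≠ 0 := ne_of_gt (by linarith [hu.2])
    rw [hq]
    apply ContDiffAt.mul
    apply ContDiffAt.mul
    · exact Real.contDiffAt_rpow_const_of_ne h1
    · exact ContDiffAt.rpow_const_of_ne
        ((contDiff_const.sub contDiff_id).contDiffAt) h2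
    · exact ContDiffAt.exp (by fun_prop)
  have hψc1 : ContDiff ℝ 1 ψ := by
    rw [contDiff_iff_contDiffAt]
    intro u
    by_cases hu : u ∈ Ioo (0:ℝ) 1
    · have hc2W : ContDiffAt ℝ 1 (fun v => 2 * W v) u :=
        contDiffAt_const.mul hWc1.contDiffAt
      exact hc2W.div (hqc u hu) (hqne u hu)
    · rw [mem_Ioo, not_and_or] at hu
      rcases hu with h0 | h1
      · have hu0 : u ≤ 0 := not_lt.mp h0
        have hev : ψ =ᶠ[𝓝 u] fun _ => (0:ℝ) := by
          filter_upwards [Iio_mem_nhds (lt_of_le_of_lt hu0 hε)] with v hv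
          exact hψ0 v (Or.inl (le_of_lt hv))
        exact contDiffAt_const.congr_of_eventuallyEq hev
      · have hu1 : 1 ≤ u := not_lt.mp h1
        have hev : ψ =ᶠ[𝓝 u] fun _ => (0:ℝ) := by
          filter_upwards [Ioi_mem_nhds (show 1 - ε < u by linarith)] with v hv
          exact hψ0 v (Or.inr (le_of_lt hv))
        exact contDiffAt_const.congr_of_eventuallyEq hev
  have hψd : ∀ u ∈ Ioo (0:ℝ) 1, HasDerivAt ψ
      ((2 * h u * q u - 2 * W u * (2 * (S * (u * (1 - u)) + thetaBar θp θm u)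
        * dens θp θm S u)) / (q u)^2) u := by
    intro u hu
    exact ((hWd u).const_mul 2).div (hasDerivAt_qfun hu) (hqne u hu)
  have hkey : ∀ u ∈ Ioo (0:ℝ) 1,
      (S * (u * (1 - u)) + thetaBar θp θm u) * ψ u
        + (1/2) * (u * (1-u)) * deriv ψ u = g u := by
    intro u hu
    rw [(hψd u hu).deriv]
    have hqe : q u = u * (1-u) * dens θp θm S u := qfun_eq hu
    have hdne : dens θp θm S u ≠ 0 := ne_of_gt (dens_pos hu)
    have hune : u ≠ 0 := ne_of_gt hu.1
    have h1une : (1:ℝ) - u ≠ 0 := ne_of_gt (by linarith [hu.2])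
    simp only [hψ, hh, hqe]
    field_simp
    ring
  have hψcont : Continuous ψ := hψc1.continuous
  set φ : ℝ → ℝ := fun u => ∫ t in (0:ℝ)..u, ψ t with hφ
  have hφd : ∀ u, HasDerivAt φ (ψ u) u := fun u =>
    (hψcont.integral_hasStrictDerivAt 0 u).hasDerivAt
  have hφderiv : deriv φ = ψ := funext fun u => (hφd u).deriv
  have hφ2 : ContDiff ℝ 2 φ := contDiff_two_iff.mpr
    ⟨fun u => (hφd u).differentiableAt, hφderiv ▸ hψc1⟩
  have h0 := hinv φ hφ2
  have hgen : ∀ x ∈ Icc (0:ℝ) 1, gen θp θm ca cb μ φ x = g x := by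
    intro x hx
    rw [gen, hφderiv]
    rcases eq_or_lt_of_le hx.1 with h0x | h0x
    · rw [← h0x]
      have hψz : ψ 0 = 0 := hψ0 0 (Or.inl hε.le)
      have hgz : g 0 = 0 := hsupp 0 (by intro hc; linarith [hc.1])
      rw [hψz, hgz]; ring
    rcases eq_or_lt_of_le hx.2 with h1x | h1x
    · rw [h1x]
      have hψz : ψ 1 = 0 := hψ0 1 (Or.inr (by linarith))
      have hgz : g 1 = 0 := hsupp 1 (by intro hc; linarith [hc.2])
      rw [hψz, hgz]; ring
    · exact hkey x ⟨h0x, h1x⟩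
  have hmem : ∀ᵐ a ∂μ, a ∈ Icc (0:ℝ) 1 := by
    rw [ae_iff]
    have : {a : ℝ | ¬ a ∈ Icc (0:ℝ) 1} = (Icc (0:ℝ) 1)ᶜ := rfl
    rw [this, hcompl]
  calc ∫ a, g a ∂μ = ∫ a, gen θp θm ca cb μ φ a ∂μ := by
        apply integral_congr_ae
        filter_upwards [hmem] with a ha
        exact (hgen a ha).symm
    _ = 0 := h0


variable {θp θm y s ca cb : ℝ}

/-- Continuous cutoff: `0` off `Icc ε (1-ε)`, `1` where `min x (1-x) ≥ 2ε`. -/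
noncomputable def cutE (ε x : ℝ) : ℝ := max 0 (min 1 ((min x (1-x) - ε)/ε))

lemma cutE_continuous (ε : ℝ) : Continuous (cutE ε) := by
  unfold cutE; fun_prop

lemma cutE_nonneg (ε x : ℝ) : 0 ≤ cutE ε x := le_max_left _ _

lemma cutE_le_one {ε x : ℝ} (hε : 0 < ε) : cutE ε x ≤ 1 := by
  unfold cutE
  apply max_le (by norm_num) (min_le_left _ _)

lemma cutE_zero {ε x : ℝ} (hε : 0 < ε) (hx : x ∉ Icc ε (1-ε)) : cutE ε x = 0 := by
  unfold cutE
  have hneg : (min x (1-x) - ε)/ε < 0 := by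
    apply div_neg_of_neg_of_pos _ hε
    rw [mem_Icc, not_and_or] at hx
    rcases hx with h1 | h2
    · have : x < ε := not_le.mp h1
      have := min_le_left x (1-x); linarith
    · have : 1 - ε < x := not_le.mp h2
      have := min_le_right x (1-x); linarith
  have : min 1 ((min x (1-x) - ε)/ε) < 0 := lt_of_le_of_lt (min_le_right _ _) hneg
  exact max_eq_left (le_of_lt this)

lemma cutE_one {ε x : ℝ} (hε : 0 < ε) (hx : 2*ε ≤ min x (1-x)) : cutE ε x = 1 := by
  unfold cutE
  have h1 : (1:ℝ) ≤ (min x (1-x) - ε)/ε := by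
    rw [le_div_iff₀ hε]; linarith
  rw [min_eq_left h1]
  exact max_eq_right (by norm_num)

/-- Step A: all integrals of admissible test functions against `μ` are
proportional to those against `dens`. -/
lemma stepA (hθp : 0 < θp) (hθm : 0 < θm) {μ : Measure ℝ} [IsProbabilityMeasure μ]
    (hcompl : μ (Icc (0:ℝ) 1)ᶜ = 0)
    (hinv : ∀ φ : ℝ → ℝ, ContDiff ℝ 2 φ → ∫ x, gen θp θm ca cb μ φ x ∂μ = 0) :
    ∃ κ : ℝ, ∀ g : ℝ → ℝ, Continuous g →
      (∃ ε, 0 < ε ∧ ε < 1/2 ∧ ∀ x, x ∉ Icc ε (1-ε) → g x = 0) →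
      ∫ a, g a ∂μ
        = κ * ((∫ a in Icc (0:ℝ) 1, g a * dens θp θm (sbar ca cb μ) a)
            / Z θp θm (sbar ca cb μ)) := by
  set S := sbar ca cb μ with hS
  set g₀ : ℝ → ℝ := cutE (1/8) with hg₀
  have hg₀c : Continuous g₀ := cutE_continuous _
  have hg₀supp : ∀ x, x ∉ Icc (1/8 : ℝ) (1 - 1/8) → g₀ x = 0 :=
    fun x hx => cutE_zero (by norm_num) hx
  set I₀ : ℝ := ∫ a in Icc (0:ℝ) 1, g₀ a * dens θp θm S a with hI₀
  have hI₀pos : 0 < I₀ := by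
    rw [hI₀]
    have hint : IntegrableOn (fun a => g₀ a * dens θp θm S a) (Icc 0 1) :=
      integrableOn_mul_dens hθp hθm hg₀c
    have hnn : 0 ≤ᵐ[volume.restrict (Icc (0:ℝ) 1)] fun a => g₀ a * dens θp θm S a := by
      filter_upwards [ae_restrict_mem measurableSet_Icc] with a ha
      exact mul_nonneg (cutE_nonneg _ _) (dens_nonneg ha)
    rw [setIntegral_pos_iff_support_of_nonneg_ae hnn hint]
    have hsub : Ioo (3/8 : ℝ) (5/8) ⊆
        Function.support (fun a => g₀ a * dens θp θm S a) ∩ Icc 0 1 := by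
      intro a ha
      have ha1 : (3/8 : ℝ) < a := ha.1
      have ha2 : a < 5/8 := ha.2
      have haIoo : a ∈ Ioo (0:ℝ) 1 := ⟨by linarith, by linarith⟩
      constructor
      · have hg1 : g₀ a = 1 := by
          apply cutE_one (by norm_num)
          rw [le_min_iff]; constructor <;> [linarith; linarith]
        simp only [Function.mem_support, hg1, one_mul]
        exact ne_of_gt (dens_pos haIoo)
      · exact Ioo_subset_Icc_self haIoo
    calc (0:ℝ≥0∞) < volume (Ioo (3/8 : ℝ) (5/8)) := by
          rw [Real.volume_Ioo]; norm_num
      _ ≤ _ := measure_mono hsub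
  refine ⟨(∫ a, g₀ a ∂μ) / (I₀ / Z θp θm S), ?_⟩
  intro g hgc ⟨ε, hε, hε2, hsupp⟩
  set Ig : ℝ := ∫ a in Icc (0:ℝ) 1, g a * dens θp θm S a with hIg
  -- apply test_zero to g - (Ig/I₀) • g₀
  set c : ℝ := Ig / I₀ with hc
  set g' : ℝ → ℝ := fun x => g x - c * g₀ x with hg'
  have hg'c : Continuous g' := hgc.sub (continuous_const.mul hg₀c)
  set ε' : ℝ := min ε (1/8) with hε'
  have hε'pos : 0 < ε' := lt_min hε (by norm_num)
  have hε'lt : ε' < 1/2 := lt_of_le_of_lt (min_le_left _ _) hε2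
  have hg'supp : ∀ x, x ∉ Icc ε' (1-ε') → g' x = 0 := by
    intro x hx
    rw [mem_Icc, not_and_or] at hx
    have hgz : g x = 0 ∧ g₀ x = 0 := by
      rcases hx with h1 | h2
      · have hxε : x < ε' := not_le.mp h1
        constructor
        · exact hsupp x (fun hc' => absurd hc'.1
            (not_le.mpr (lt_of_lt_of_le hxε (min_le_left _ _))))
        · exact hg₀supp x (fun hc' => absurd hc'.1
            (not_le.mpr (lt_of_lt_of_le hxε (min_le_right _ _))))
      · have hxε : 1 - ε' < x := not_le.mp h2
        constructor
        · apply hsupp x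
          intro hc'
          have : ε' ≤ ε := min_le_left _ _
          have := hc'.2; linarith
        · apply hg₀supp x
          intro hc'
          have : ε' ≤ (1/8 : ℝ) := min_le_right _ _
          have := hc'.2; linarith
    show g x - c * g₀ x = 0
    rw [hgz.1, hgz.2]; ring
  have hortho : ∫ a in Icc (0:ℝ) 1, g' a * dens θp θm S a = 0 := by
    have hint1 : IntegrableOn (fun a => g a * dens θp θm S a) (Icc 0 1) :=
      integrableOn_mul_dens hθp hθm hgc
    have hint2 : IntegrableOn (fun a => (c * g₀ a) * dens θp θm S a) (Icc 0 1) :=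
      integrableOn_mul_dens hθp hθm (continuous_const.mul hg₀c)
    have : ∫ a in Icc (0:ℝ) 1, g' a * dens θp θm S a
        = (∫ a in Icc (0:ℝ) 1, g a * dens θp θm S a)
          - ∫ a in Icc (0:ℝ) 1, (c * g₀ a) * dens θp θm S a := by
      rw [← integral_sub hint1 hint2]
      apply setIntegral_congr_ae measurableSet_Icc
      filter_upwards with a _
      rw [hg']; ring
    rw [this]
    have h2 : ∫ a in Icc (0:ℝ) 1, (c * g₀ a) * dens θp θm S a
        = c * ∫ a in Icc (0:ℝ) 1, g₀ a * dens θp θm S a := by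
      rw [← integral_const_mul]
      apply setIntegral_congr_ae measurableSet_Icc
      filter_upwards with a _
      ring
    rw [h2, ← hIg, ← hI₀, hc, div_mul_cancel₀ _ (ne_of_gt hI₀pos), sub_self]
  have hzero : ∫ a, g' a ∂μ = 0 :=
    test_zero hθp hθm hcompl hinv hg'c hε'pos hε'lt hg'supp hortho
  -- integrability over μ
  have hμfin : IsFiniteMeasure μ := inferInstance
  have hintg : Integrable g μ := by
    apply Continuous.integrable_of_hasCompactSupport hgc
    apply HasCompactSupport.intro (isCompact_Icc (a := ε) (b := 1-ε))
    exact hsupp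
  have hintg₀ : Integrable g₀ μ := by
    apply Continuous.integrable_of_hasCompactSupport hg₀c
    apply HasCompactSupport.intro (isCompact_Icc (a := (1/8:ℝ)) (b := 1-1/8))
    exact hg₀supp
  have hsplit : ∫ a, g' a ∂μ = (∫ a, g a ∂μ) - c * ∫ a, g₀ a ∂μ := by
    rw [hg']
    rw [integral_sub hintg (hintg₀.const_mul c)]
    rw [integral_const_mul]
  rw [hsplit] at hzero
  have : ∫ a, g a ∂μ = c * ∫ a, g₀ a ∂μ := by linarith
  have hZne : Z θp θm S ≠ 0 := ne_of_gt (Zpos hθp hθm)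
  have hI₀ne : I₀ ≠ 0 := ne_of_gt hI₀pos
  rw [this, hc]
  field_simp

variable {θp θm y s ca cb : ℝ}

/-- Step B: limiting along cutoffs. -/
lemma stepB (hθp : 0 < θp) (hθm : 0 < θm) {μ : Measure ℝ} [IsProbabilityMeasure μ]
    {κ : ℝ}
    (hκ : ∀ g : ℝ → ℝ, Continuous g →
      (∃ ε, 0 < ε ∧ ε < 1/2 ∧ ∀ x, x ∉ Icc ε (1-ε) → g x = 0) →
      ∫ a, g a ∂μ
        = κ * ((∫ a in Icc (0:ℝ) 1, g a * dens θp θm (sbar ca cb μ) a)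
            / Z θp θm (sbar ca cb μ)))
    {f : ℝ → ℝ} (hf : Continuous f) :
    ∫ a in Ioo (0:ℝ) 1, f a ∂μ
      = κ * ((∫ a in Icc (0:ℝ) 1, f a * dens θp θm (sbar ca cb μ) a)
          / Z θp θm (sbar ca cb μ)) := by
  set S := sbar ca cb μ with hS
  set e : ℕ → ℝ := fun n => 1/((n:ℝ)+4) with he
  have hepos : ∀ n, 0 < e n := by
    intro n; rw [he]; positivity
  have helt : ∀ n, e n < 1/2 := by
    intro n
    rw [he]
    rw [div_lt_div_iff₀ (by positivity) (by norm_num)]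
    have : (0:ℝ) ≤ (n:ℝ) := Nat.cast_nonneg n
    linarith
  have he0 : Tendsto (fun n => 2 * e n) atTop (𝓝 0) := by
    rw [he]
    have h1 : Tendsto (fun n : ℕ => (n:ℝ)+4) atTop atTop :=
      tendsto_atTop_add_const_right _ _ tendsto_natCast_atTop_atTop
    have h2 : Tendsto (fun n : ℕ => ((n:ℝ)+4)⁻¹) atTop (𝓝 0) :=
      tendsto_inv_atTop_zero.comp h1
    have := h2.const_mul (2:ℝ)
    simpa [one_div, mul_zero] using this
  set G : ℕ → ℝ → ℝ := fun n a => f a * cutE (e n) a with hG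
  have hGc : ∀ n, Continuous (G n) := fun n => hf.mul (cutE_continuous _)
  have hGsupp : ∀ n, ∀ x, x ∉ Icc (e n) (1 - e n) → G n x = 0 := by
    intro n x hx
    simp only [hG, cutE_zero (hepos n) hx, mul_zero]
  have hA : ∀ n, ∫ a, G n a ∂μ
      = κ * ((∫ a in Icc (0:ℝ) 1, G n a * dens θp θm S a) / Z θp θm S) :=
    fun n => hκ (G n) (hGc n) ⟨e n, hepos n, helt n, hGsupp n⟩
  have hL : ∀ n, ∫ a, G n a ∂μ = ∫ a in Ioo (0:ℝ) 1, G n a ∂μ := by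
    intro n
    rw [setIntegral_eq_integral_of_forall_compl_eq_zero]
    intro x hx
    apply hGsupp n
    intro hc
    rw [mem_Ioo, not_and_or] at hx
    have h1 := hc.1
    have h2 := hc.2
    have := hepos n
    have := helt n
    rcases hx with h | h
    · have : x ≤ 0 := not_lt.mp h; linarith
    · have : 1 ≤ x := not_lt.mp h; linarith
  -- pointwise convergence on Ioo
  have hptw : ∀ x ∈ Ioo (0:ℝ) 1, Tendsto (fun n => G n x) atTop (𝓝 (f x)) := by
    intro x hx
    have hmin : 0 < min x (1-x) := lt_min hx.1 (by linarith [hx.2])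
    have hev : ∀ᶠ n in atTop, G n x = f x := by
      filter_upwards [he0.eventually_lt_const hmin] with n hn
      simp only [hG, cutE_one (hepos n) (le_of_lt hn), mul_one]
    exact tendsto_const_nhds.congr' (by filter_upwards [hev] with n hn; rw [hn])
  -- DCT over μ restricted to Ioo
  have hμIoo : Tendsto (fun n => ∫ a in Ioo (0:ℝ) 1, G n a ∂μ) atTop
      (𝓝 (∫ a in Ioo (0:ℝ) 1, f a ∂μ)) := by
    apply tendsto_integral_of_dominated_convergence (bound := fun a => ‖f a‖)
    · exact fun n => (hGc n).aestronglyMeasurable.restrict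
    · have : IntegrableOn (fun a => ‖f a‖) (Icc (0:ℝ) 1) μ :=
        hf.norm.continuousOn.integrableOn_compact isCompact_Icc
      exact this.mono_set Ioo_subset_Icc_self
    · intro n
      filter_upwards with a
      simp only [hG, norm_mul]
      calc ‖f a‖ * ‖cutE (e n) a‖ ≤ ‖f a‖ * 1 := by
            apply mul_le_mul_of_nonneg_left _ (norm_nonneg _)
            rw [Real.norm_eq_abs, abs_of_nonneg (cutE_nonneg _ _)]
            exact cutE_le_one (hepos n)
        _ = ‖f a‖ := mul_one _
    · filter_upwards [ae_restrict_mem measurableSet_Ioo] with a ha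
      exact hptw a ha
  -- DCT over volume restricted to Icc
  have hvIcc : Tendsto (fun n => ∫ a in Icc (0:ℝ) 1, G n a * dens θp θm S a) atTop
      (𝓝 (∫ a in Icc (0:ℝ) 1, f a * dens θp θm S a)) := by
    apply tendsto_integral_of_dominated_convergence
      (bound := fun a => ‖f a‖ * dens θp θm S a)
    · exact fun n => ((hGc n).measurable.mul measurable_dens).aestronglyMeasurable.restrict
    · exact integrableOn_mul_dens hθp hθm hf.norm
    · intro n
      filter_upwards [ae_restrict_mem measurableSet_Icc] with a ha
      rw [norm_mul, Real.norm_of_nonneg (dens_nonneg ha)]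
      apply mul_le_mul_of_nonneg_right _ (dens_nonneg ha)
      simp only [hG, norm_mul]
      calc ‖f a‖ * ‖cutE (e n) a‖ ≤ ‖f a‖ * 1 := by
            apply mul_le_mul_of_nonneg_left _ (norm_nonneg _)
            rw [Real.norm_eq_abs, abs_of_nonneg (cutE_nonneg _ _)]
            exact cutE_le_one (hepos n)
        _ = ‖f a‖ := mul_one _
    · have hae : ∀ᵐ a ∂(volume.restrict (Icc (0:ℝ) 1)), a ∈ Ioo (0:ℝ) 1 := by
        rw [ae_restrict_iff' measurableSet_Icc]
        have hnull : (volume : Measure ℝ) ({0, 1} : Set ℝ) = 0 :=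
          ((Set.countable_singleton (1:ℝ)).insert 0).measure_zero volume
        rw [ae_iff]
        apply measure_mono_null _ hnull
        intro a ha
        simp only [mem_setOf_eq, _root_.not_imp] at ha
        have h1 := ha.1
        have h2 := ha.2
        rw [mem_Ioo, not_and_or] at h2
        rcases h2 with h | h
        · left; linarith [h1.1, not_lt.mp h]
        · right
          have := h1.2
          have := not_lt.mp h
          simp only [mem_singleton_iff]
          linarith
      filter_upwards [hae] with a ha
      exact (hptw a ha).mul_const _
  -- combine
  have h1 : Tendsto (fun n => ∫ a, G n a ∂μ) atTop
      (𝓝 (∫ a in Ioo (0:ℝ) 1, f a ∂μ)) := by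
    apply hμIoo.congr
    intro n
    exact (hL n).symm
  have h2 : Tendsto (fun n => ∫ a, G n a ∂μ) atTop
      (𝓝 (κ * ((∫ a in Icc (0:ℝ) 1, f a * dens θp θm S a) / Z θp θm S))) := by
    have := ((hvIcc.div_const (Z θp θm S)).const_mul κ)
    apply this.congr
    intro n
    exact (hA n).symm
  exact tendsto_nhds_unique h1 h2

/-- Decomposition of an integral over `μ` carried by `[0,1]`. -/
lemma decomp {μ : Measure ℝ} [IsProbabilityMeasure μ]
    (hcompl : μ (Icc (0:ℝ) 1)ᶜ = 0) {f : ℝ → ℝ} (hf : Continuous f) :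
    ∫ a, f a ∂μ = (μ {0}).toReal * f 0 + (μ {1}).toReal * f 1
      + ∫ a in Ioo (0:ℝ) 1, f a ∂μ := by
  have hmem : ∀ᵐ a ∂μ, a ∈ Icc (0:ℝ) 1 := by
    rw [ae_iff]
    exact hcompl
  have h1 : ∫ a, f a ∂μ = ∫ a in Icc (0:ℝ) 1, f a ∂μ := by
    rw [Measure.restrict_eq_self_of_ae_mem hmem]
  have hseteq : Icc (0:ℝ) 1 = {0} ∪ (Ioo 0 1 ∪ {1}) := by
    ext x
    simp only [mem_Icc, mem_union, mem_singleton_iff, mem_Ioo]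
    constructor
    · rintro ⟨hx0, hx1⟩
      rcases eq_or_lt_of_le hx0 with h | h
      · exact Or.inl h.symm
      rcases eq_or_lt_of_le hx1 with h' | h'
      · exact Or.inr (Or.inr h')
      · exact Or.inr (Or.inl ⟨h, h'⟩)
    · rintro (h | ⟨h, h'⟩ | h)
      · rw [h]; norm_num
      · constructor <;> linarith
      · rw [h]; norm_num
  have hint : IntegrableOn f (Icc (0:ℝ) 1) μ :=
    hf.continuousOn.integrableOn_compact isCompact_Icc
  have hd1 : Disjoint ({0} : Set ℝ) (Ioo 0 1 ∪ {1}) := by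
    rw [Set.disjoint_left]
    intro a ha hb
    rw [mem_singleton_iff] at ha
    rcases hb with h | h
    · rw [ha] at h; exact absurd h.1 (lt_irrefl 0)
    · rw [mem_singleton_iff] at h; rw [ha] at h; norm_num at h
  have hd2 : Disjoint (Ioo (0:ℝ) 1) ({1} : Set ℝ) := by
    rw [Set.disjoint_left]
    intro a ha hb
    rw [mem_singleton_iff] at hb
    rw [hb] at ha
    exact absurd ha.2 (lt_irrefl 1)
  have hm2 : MeasurableSet (Ioo (0:ℝ) 1 ∪ {1}) :=
    measurableSet_Ioo.union (measurableSet_singleton 1)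
  rw [h1, hseteq]
  rw [setIntegral_union hd1 hm2
    (hint.mono_set (by rw [hseteq]; exact subset_union_left))
    (hint.mono_set (by rw [hseteq]; exact subset_union_right))]
  rw [setIntegral_union hd2 (measurableSet_singleton 1)
    (hint.mono_set (by rw [hseteq]; intro a ha; exact Or.inr (Or.inl ha)))
    (hint.mono_set (by rw [hseteq]; intro a ha; exact Or.inr (Or.inr ha)))]
  rw [integral_singleton, integral_singleton]
  simp only [smul_eq_mul, measureReal_def]
  ring

variable {θp θm y s ca cb : ℝ}

lemma forward (hθp : 0 < θp) (hθm : 0 < θm) {μ : Measure ℝ}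
    [IsProbabilityMeasure μ] (hcompl : μ (Icc (0:ℝ) 1)ᶜ = 0)
    (hinv : ∀ φ : ℝ → ℝ, ContDiff ℝ 2 φ → ∫ x, gen θp θm ca cb μ φ x ∂μ = 0) :
    μ = PiMeas θp θm (sbar ca cb μ) := by
  set S := sbar ca cb μ with hS
  obtain ⟨κ, hκ⟩ := stepA hθp hθm hcompl hinv
  have hZ : 0 < Z θp θm S := Zpos hθp hθm
  have hZne : Z θp θm S ≠ 0 := ne_of_gt hZ
  -- T1 : total mass
  have hT1 : 1 = (μ {0}).toReal + (μ {1}).toReal + κ := by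
    have hone : ∫ a, (fun _ : ℝ => (1:ℝ)) a ∂μ = 1 := by
      simp
    have hd := decomp hcompl (continuous_const : Continuous fun _ : ℝ => (1:ℝ))
    rw [hone] at hd
    have hB := stepB hθp hθm hκ (continuous_const : Continuous fun _ : ℝ => (1:ℝ))
    have hIcc1 : ∫ a in Icc (0:ℝ) 1, (fun _ : ℝ => (1:ℝ)) a * dens θp θm S a
        = Z θp θm S := by
      rw [show Z θp θm S = ∫ z in Icc (0:ℝ) 1, dens θp θm S z from rfl]
      apply setIntegral_congr_ae measurableSet_Icc
      filter_upwards with a _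
      simp
    rw [hB, hIcc1, div_self hZne, mul_one] at hd
    linarith [hd]
  -- T2 : test φ = id
  set f₁ : ℝ → ℝ := fun x => S * (x * (1-x)) + thetaBar θp θm x with hf₁
  have hf₁c : Continuous f₁ := by unfold f₁; unfold thetaBar; fun_prop
  have hT2 : (μ {0}).toReal * θp - (μ {1}).toReal * θm = 0 := by
    have hgenid : ∀ x, gen θp θm ca cb μ id x = f₁ x := by
      intro x
      rw [gen, deriv_id', deriv_const']
      simp [hf₁, hS]
    have hid : ∫ a, f₁ a ∂μ = 0 := by
      rw [← hinv id contDiff_id]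
      apply integral_congr_ae
      filter_upwards with x
      exact (hgenid x).symm
    have hibp : ∫ a in Icc (0:ℝ) 1, f₁ a * dens θp θm S a = 0 := by
      have h0 := core_ibp (y := S) hθp hθm (ψ := fun _ => (1:ℝ)) contDiff_const
      have heq2 : ∫ a in Icc (0:ℝ) 1, f₁ a * dens θp θm S a
          = ∫ a in Icc (0:ℝ) 1,
            ((S * (a * (1 - a)) + thetaBar θp θm a) * (fun _ => (1:ℝ)) a
              + (1/2) * (a * (1 - a)) * deriv (fun _ => (1:ℝ)) a) * dens θp θm S a := by
        apply setIntegral_congr_ae measurableSet_Icc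
        filter_upwards with a _
        rw [deriv_const']
        simp [hf₁]
      rw [heq2]
      exact h0
    have hd := decomp hcompl hf₁c
    have hB := stepB hθp hθm hκ hf₁c
    rw [hibp, zero_div, mul_zero] at hB
    rw [hid, hB] at hd
    have hv0 : f₁ 0 = θp := by simp [hf₁, thetaBar]
    have hv1 : f₁ 1 = -θm := by simp [hf₁, thetaBar]
    rw [hv0, hv1] at hd
    linarith [hd]
  -- T3 : test φ = x²/2
  set f₂ : ℝ → ℝ := fun x => (S * (x * (1-x)) + thetaBar θp θm x) * x
      + (1/2) * (x * (1-x)) with hf₂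
  have hf₂c : Continuous f₂ := by unfold f₂; unfold thetaBar; fun_prop
  have hT3 : (μ {1}).toReal * θm = 0 := by
    set φ₂ : ℝ → ℝ := fun x => x^2/2 with hφ₂
    have hd1 : deriv φ₂ = fun x => x := by
      funext u
      rw [hφ₂]
      rw [((hasDerivAt_pow 2 u).div_const 2).deriv]
      push_cast
      ring
    have hd2 : deriv (deriv φ₂) = fun _ => (1:ℝ) := by
      rw [hd1]
      exact deriv_id''
    have hφ₂c : ContDiff ℝ 2 φ₂ := by
      apply contDiff_two_iff.mpr
      constructor
      · intro u
        exact (((hasDerivAt_pow 2 u).div_const 2)).differentiableAt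
      · rw [hd1]
        exact contDiff_id
    have hgenφ₂ : ∀ x, gen θp θm ca cb μ φ₂ x = f₂ x := by
      intro x
      rw [gen, hd2, hd1]
      simp only [hf₂]
      ring
    have hid : ∫ a, f₂ a ∂μ = 0 := by
      rw [← hinv φ₂ hφ₂c]
      apply integral_congr_ae
      filter_upwards with x
      exact (hgenφ₂ x).symm
    have hibp : ∫ a in Icc (0:ℝ) 1, f₂ a * dens θp θm S a = 0 := by
      have h0 := core_ibp (y := S) hθp hθm (ψ := fun x => x) contDiff_id
      have heq2 : ∫ a in Icc (0:ℝ) 1, f₂ a * dens θp θm S a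
          = ∫ a in Icc (0:ℝ) 1,
            ((S * (a * (1 - a)) + thetaBar θp θm a) * (fun x => x) a
              + (1/2) * (a * (1 - a)) * deriv (fun x : ℝ => x) a) * dens θp θm S a := by
        apply setIntegral_congr_ae measurableSet_Icc
        filter_upwards with a _
        rw [deriv_id'']
        simp only [hf₂]
        ring
      rw [heq2]
      exact h0
    have hd := decomp hcompl hf₂c
    have hB := stepB hθp hθm hκ hf₂c
    rw [hibp, zero_div, mul_zero] at hB
    rw [hid, hB] at hd
    have hv0 : f₂ 0 = 0 := by simp [hf₂, thetaBar]
    have hv1 : f₂ 1 = -θm := by simp [hf₂, thetaBar]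
    rw [hv0, hv1] at hd
    linarith [hd]
  have hb1 : (μ {1}).toReal = 0 := by
    have hmne : θm ≠ 0 := ne_of_gt hθm
    rcases mul_eq_zero.mp hT3 with h | h
    · exact h
    · exact absurd h hmne
  have ha0 : (μ {0}).toReal = 0 := by
    rw [hb1] at hT2
    have hpne : θp ≠ 0 := ne_of_gt hθp
    have hz : (μ {0}).toReal * θp = 0 := by linarith
    rcases mul_eq_zero.mp hz with h | h
    · exact h
    · exact absurd h hpne
  have hκ1 : κ = 1 := by rw [hb1, ha0] at hT1; linarith
  -- conclude equality of measures
  haveI hPP : IsProbabilityMeasure (PiMeas θp θm S) := PiMeas_prob hθp hθm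
  have hint_eq : ∀ f : ℝ → ℝ, Continuous f →
      ∫ a, f a ∂μ = ∫ a, f a ∂(PiMeas θp θm S) := by
    intro f hf
    have hd := decomp hcompl hf
    have hB := stepB hθp hθm hκ hf
    rw [hb1, ha0] at hd
    rw [hκ1, one_mul] at hB
    rw [hd, hB]
    rw [integral_PiMeas]
    rw [← integral_div]
    simp only [zero_mul, add_zero, zero_add]
    apply setIntegral_congr_ae measurableSet_Icc
    filter_upwards with a _
    ring
  apply ext_of_forall_lintegral_eq_of_IsFiniteMeasure
  intro fb
  have hcoe : Continuous fun x => ((fb x : ℝ)) :=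
    NNReal.continuous_coe.comp fb.continuous
  have hreal : ∫ x, ((fb x : ℝ)) ∂μ = ∫ x, ((fb x : ℝ)) ∂(PiMeas θp θm S) :=
    hint_eq _ hcoe
  have h1 := BoundedContinuousFunction.toReal_lintegral_coe_eq_integral fb μ
  have h2 := BoundedContinuousFunction.toReal_lintegral_coe_eq_integral fb (PiMeas θp θm S)
  have hfin1 : ∫⁻ x, (fb x : ℝ≥0∞) ∂μ ≠ ⊤ :=
    (BoundedContinuousFunction.lintegral_lt_top_of_nnreal μ fb).ne
  have hfin2 : ∫⁻ x, (fb x : ℝ≥0∞) ∂(PiMeas θp θm S) ≠ ⊤ :=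
    (BoundedContinuousFunction.lintegral_lt_top_of_nnreal _ fb).ne
  apply (ENNReal.toReal_eq_toReal_iff' hfin1 hfin2).mp
  rw [h1, h2]
  exact hreal


end WF

/-- Characterization of invariant distributions: with `θ⁺, θ⁻ > 0` and
`χ(y) := s̄(Π_y)`, the map `χ` has at least one fixed point, and a probability
measure `ξ` on `[0,1]` is invariant for the Wright–Fisher McKean–Vlasov
equation if and only if `ξ = Π_{y*}` for some fixed point `y*` of `χ`. -/
theorem invariant_distributions (θp θm : ℝ) (hθp : 0 < θp) (hθm : 0 < θm)
    (ca cb cc : ℝ) :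
    (∃ y : ℝ, sbar ca cb (PiMeas θp θm y) = y) ∧
    (∀ ξ : Measure ℝ, IsProbabilityMeasure ξ → ξ (Icc (0 : ℝ) 1)ᶜ = 0 →
      (IsInvariantWF θp θm ca cb ξ ↔
        ∃ y : ℝ, sbar ca cb (PiMeas θp θm y) = y ∧ ξ = PiMeas θp θm y)) := by
  constructor
  · exact WF.exists_fixed_point hθp hθm ca cb
  · intro ξ hprob hcompl
    constructor
    · rintro ⟨hprob', hcompl', hgen⟩
      haveI := hprob'
      have hforward := WF.forward hθp hθm hcompl' hgen
      refine ⟨sbar ca cb ξ, ?_, hforward⟩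
      conv_rhs => rw [hforward]
    · rintro ⟨y, hfix, rfl⟩
      exact ⟨WF.PiMeas_prob hθp hθm, WF.PiMeas_compl,
        fun φ hφ => WF.gen_PiMeas_zero hθp hθm hfix hφ⟩
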